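/- arXiv:1211.0290 — 3 statements merged into one kernel-verified Lean document; each statement's English description precedes it below -/
import Mathlib

section
/- Let δ ≥ 0, let y(t) = Σ_{|k|≤f_lo} y_k e^{i2πkt} be a trigonometric polynomial of degree at most f_lo (so Q_lo y = y, and F_lo y = (y_k)), let x_est be a finite complex Borel measure on 𝕋 with polar decomposition x_est = e^{iφ}|x_est| (φ a real Borel function) satisfying ‖Q_lo x_est − y‖_{L2} ≤ δ, and let u ∈ ℂⁿ satisfy sup_{t∈𝕋} |(F_lo* u)(t)| ≤ 1. If strong duality holds at this pair, i.e. ‖x_est‖_TV = Re⟨F_lo y, u⟩ − δ ‖u‖_{ℓ2}, then (F_lo* u)(t) = e^{iφ(t)} for |x_est|-almost every t; in particular, if x_est = Σ_j a_j δ_{t_j} is atomic, then (F_lo* u)(t_j) = a_j/|a_j| for every j with a_j ≠ 0. -/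
noncomputable section

open MeasureTheory Complex Real Set

/-- The torus `𝕋 = ℝ/ℤ`. -/
abbrev Torus := AddCircle (1 : ℝ)

instance : Fact ((0:ℝ) < 1) := ⟨one_pos⟩

/-- The representative of a point of the torus in `(-1/2, 1/2]`. -/
def srep (t : Torus) : ℝ := (AddCircle.equivIoc (1:ℝ) (-(1/2)) t : ℝ)

/-- The complex exponential `e^{i 2π k t}` on the torus. -/
def char (k : ℤ) (t : Torus) : ℂ := Complex.exp (2 * π * Complex.I * k * srep t)

/-- The Dirichlet kernel with cut-off frequency `flo`. -/
def Klo (flo : ℕ) (t : Torus) : ℂ := ∑ k ∈ Finset.Icc (-(flo:ℤ)) (flo:ℤ), char k t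

/-- The Fejér kernel with cut-off frequency `fhi`. -/
def Khi (fhi : ℕ) (t : Torus) : ℂ :=
  ((fhi : ℂ) + 1)⁻¹ *
    ∑ k ∈ Finset.Icc (-(fhi:ℤ)) (fhi:ℤ), (((fhi : ℝ) + 1 - |(k : ℝ)|) : ℂ) * char k t

/-- A finite complex Borel measure, given through its polar decomposition
`μ = phase ⬝ pos` with `pos = |μ|` a finite positive measure and `phase` a
unit-modulus measurable density. -/
structure PolarMeasure (α : Type) [MeasurableSpace α] where
  pos : Measure α
  finite : IsFiniteMeasure pos
  phase : α → ℂ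
  meas : Measurable phase
  unit : ∀ t, ‖phase t‖ = 1

namespace PolarMeasure

variable {α : Type} [MeasurableSpace α]

/-- The integral `∫ g dμ` of a complex function against a complex measure. -/
def integ (μ : PolarMeasure α) (g : α → ℂ) : ℂ := ∫ t, g t * μ.phase t ∂μ.pos

/-- The total-variation norm `‖μ‖_TV`. -/
def tv (μ : PolarMeasure α) : ℝ := (μ.pos Set.univ).toReal

/-- The total-variation norm `‖P_S μ‖_TV` of the restriction of `μ` to `S`. -/
def tvOn (μ : PolarMeasure α) (S : Set α) : ℝ := (μ.pos S).toReal

end PolarMeasure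

/-- The convolution `(K * μ)(t) = ∫ K(t-τ) μ(dτ)`. -/
def convM (K : Torus → ℂ) (μ : PolarMeasure Torus) (t : Torus) : ℂ :=
  μ.integ fun τ => K (t - τ)

/-- `(Q_lo μ)(t)`, the low-pass filtered version of the measure `μ`. -/
def QloM (flo : ℕ) (μ : PolarMeasure Torus) : Torus → ℂ := convM (Klo flo) μ

/-- `‖g‖_{L1}` on the torus (with respect to normalized Haar measure). -/
def L1norm (g : Torus → ℂ) : ℝ := ∫ t, ‖g t‖

/-- `‖g‖_{L2}` on the torus. -/
def L2norm (g : Torus → ℂ) : ℝ := Real.sqrt (∫ t, ‖g t‖ ^ 2)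

/-- `S_near^λ(j)`, the points at distance at most `0.16 λ` from `t_j`. -/
def Snear (lam : ℝ) (tj : Torus) : Set Torus := {t | dist t tj ≤ 0.16 * lam}

/-- `S_far^λ`, the points at distance more than `0.16 λ` from every point of `T`. -/
def Sfar (lam : ℝ) (T : Set Torus) : Set Torus := {t | ∀ tj ∈ T, 0.16 * lam < dist t tj}

/-- `I_{S_near^λ(j)}(μ) = λ_lo⁻² ∫_{S_near^λ(j)} (t-t_j)² |μ|(dt)`. -/
def InearJ (flo : ℕ) (lam : ℝ) (μ : PolarMeasure Torus) (tj : Torus) : ℝ :=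
  (flo : ℝ) ^ 2 * ∫ t in Snear lam tj, dist t tj ^ 2 ∂μ.pos

/-- `I_{S_near^λ}(μ) = Σ_j I_{S_near^λ(j)}(μ)`. -/
def Inear (flo : ℕ) (lam : ℝ) (μ : PolarMeasure Torus) {m : ℕ} (tp : Fin m → Torus) : ℝ :=
  ∑ j, InearJ flo lam μ (tp j)

/-- The measure `Σ_j a_j δ_{t_j}`: `x` equals this measure iff `IsSpikeTrain x a tp`. -/
def IsSpikeTrain {m : ℕ} (x : PolarMeasure Torus) (a : Fin m → ℂ) (tp : Fin m → Torus) : Prop :=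
  (x.pos = ∑ j, ENNReal.ofReal (‖a j‖) • Measure.dirac (tp j)) ∧
    ∀ j, x.phase (tp j) = a j / (‖a j‖ : ℂ)

/-- `h` is the difference `x - x'` of the two complex measures `x, x'`. -/
def IsDiff {α : Type} [MeasurableSpace α] (h x x' : PolarMeasure α) : Prop :=
  ∀ S : Set α, MeasurableSet S →
    h.integ (S.indicator fun _ => (1:ℂ)) =
      x.integ (S.indicator fun _ => (1:ℂ)) - x'.integ (S.indicator fun _ => (1:ℂ))

/-- The minimum-separation condition `Δ(T) ≥ d` for `T = {tp j}`. -/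
def Separated {m : ℕ} (tp : Fin m → Torus) (d : ℝ) : Prop :=
  ∀ j k : Fin m, j ≠ k → d ≤ dist (tp j) (tp k)


/-! ### Auxiliary lemmas for the proof -/

namespace PDSI

open AddCircle

lemma srep_coe (t : Torus) : ((srep t : ℝ) : Torus) = t := by
  have h : ((AddCircle.equivIoc (1:ℝ) (-(1/2))).symm (AddCircle.equivIoc (1:ℝ) (-(1/2)) t)) = t :=
    (AddCircle.equivIoc (1:ℝ) (-(1/2))).symm_apply_apply t
  conv_rhs => rw [← h, AddCircle.equivIoc, QuotientAddGroup.equivIocMod_symm_apply]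
  rfl

lemma char_eq_fourier (k : ℤ) (t : Torus) : char k t = fourier k t := by
  conv_rhs => rw [← srep_coe t]
  rw [fourier_coe_apply]
  simp [char]

lemma volume_eq_haar : (volume : Measure Torus) = AddCircle.haarAddCircle := by
  rw [AddCircle.volume_eq_smul_haarAddCircle]; simp

lemma integral_fourier (m : ℤ) :
    ∫ t : Torus, fourier m t = if m = 0 then 1 else 0 := by
  split_ifs with h
  · subst h
    simp only [fourier_zero]
    rw [integral_const, volume_eq_haar]
    simp
  · rw [volume_eq_haar]
    exact integral_eq_zero_of_add_right_eq_neg (fourier_add_half_inv_index h one_pos)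

lemma fourier_mul_conj (k l : ℤ) (t : Torus) :
    fourier k t * (starRingEnd ℂ) (fourier l t) = fourier (k - l) t := by
  rw [← fourier_neg, ← fourier_add]; ring_nf

lemma fourier_sub_point (k : ℤ) (t τ : Torus) :
    fourier k (t - τ) = fourier k t * (starRingEnd ℂ) (fourier k τ) := by
  rw [← fourier_neg, sub_eq_add_neg, fourier_apply, fourier_apply, fourier_apply, smul_add,
    AddCircle.toCircle_add]
  push_cast
  congr 2
  rw [smul_neg, ← neg_smul]

lemma integrable_of_bdd {μ : Measure Torus} [IsFiniteMeasure μ] {f : Torus → ℂ}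
    (hm : AEStronglyMeasurable f μ) (C : ℝ) (hC : ∀ t, ‖f t‖ ≤ C) :
    Integrable f μ :=
  (integrable_const C).mono' hm (Filter.Eventually.of_forall fun t => hC t)

/-- Parseval for finite trigonometric sums on the torus. -/
lemma parseval_finset (s : Finset ℤ) (v : ℤ → ℂ) :
    ∫ t : Torus, ‖∑ k ∈ s, v k * fourier k t‖ ^ 2
      = ∑ k ∈ s, ‖v k‖ ^ 2 := by
  have hterm : ∀ k l : ℤ, Integrable
      (fun t : Torus => v k * (starRingEnd ℂ) (v l) * fourier (k - l) t) volume := by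
    intro k l
    refine integrable_of_bdd ?_ (‖v k * (starRingEnd ℂ) (v l)‖) ?_
    · exact (Continuous.aestronglyMeasurable (by
        exact continuous_const.mul (map_continuous (fourier (k - l)))))
    · intro t
      rw [norm_mul]
      have : ‖fourier (k - l) t‖ = 1 := by
        rw [fourier_apply]; exact Circle.norm_coe _
      rw [this, mul_one]
  have key : ∀ t : Torus, (‖∑ k ∈ s, v k * fourier k t‖ ^ 2 : ℝ)
      = (∑ k ∈ s, ∑ l ∈ s, v k * (starRingEnd ℂ) (v l) * fourier (k - l) t).re := by
    intro t
    have h1 : (∑ k ∈ s, v k * fourier k t) * (starRingEnd ℂ) (∑ l ∈ s, v l * fourier l t)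
        = ∑ k ∈ s, ∑ l ∈ s, v k * (starRingEnd ℂ) (v l) * fourier (k - l) t := by
      rw [map_sum, Finset.sum_mul_sum]
      refine Finset.sum_congr rfl fun k _ => Finset.sum_congr rfl fun l _ => ?_
      rw [map_mul, ← fourier_mul_conj k l t]; ring
    rw [← h1, Complex.mul_conj]
    simp [Complex.sq_norm]
  simp only [key]
  simp only [← RCLike.re_to_complex]
  have hInt : Integrable
      (fun t : Torus => ∑ k ∈ s, ∑ l ∈ s, v k * (starRingEnd ℂ) (v l) * fourier (k - l) t)
      volume := integrable_finset_sum _ fun k _ => integrable_finset_sum _ fun l _ => hterm k l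
  rw [integral_re hInt]
  simp only [RCLike.re_to_complex]
  rw [integral_finset_sum _ fun k _ =>
    integrable_finset_sum _ fun l _ => hterm k l]
  have : ∀ k ∈ s, ∫ t : Torus, ∑ l ∈ s, v k * (starRingEnd ℂ) (v l) * fourier (k - l) t
      = v k * (starRingEnd ℂ) (v k) := by
    intro k hk
    rw [integral_finset_sum _ fun l _ => hterm k l]
    have h2 : ∀ l ∈ s, ∫ t : Torus, v k * (starRingEnd ℂ) (v l) * fourier (k - l) t
        = v k * (starRingEnd ℂ) (v l) * (if l = k then 1 else 0) := by
      intro l _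
      rw [integral_const_mul, integral_fourier]
      congr 2
      simp [sub_eq_zero, eq_comm]
    rw [Finset.sum_congr rfl h2]
    simp [Finset.sum_ite_eq, hk]
  rw [Finset.sum_congr rfl this]
  rw [Complex.re_sum]
  refine Finset.sum_congr rfl fun k _ => ?_
  rw [Complex.mul_conj]
  simp [Complex.sq_norm]

end PDSI

/-- Lemma 3.1: at a primal-dual optimal pair the dual polynomial
interpolates the sign of the primal solution. -/
theorem primal_dual_sign_interpolation
    (flo : ℕ) (hflo : 0 < flo) (δ : ℝ) (hδ : 0 ≤ δ)
    (yc : ℤ → ℂ)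
    (xest : PolarMeasure Torus)
    (hfeas : L2norm (fun t => QloM flo xest t -
      ∑ k ∈ Finset.Icc (-(flo:ℤ)) (flo:ℤ), yc k * char k t) ≤ δ)
    (u : ℤ → ℂ)
    (hbound : ∀ t : Torus,
      ‖∑ k ∈ Finset.Icc (-(flo:ℤ)) (flo:ℤ), u k * char k t‖ ≤ 1)
    (hstrong : xest.tv =
      (∑ k ∈ Finset.Icc (-(flo:ℤ)) (flo:ℤ), (starRingEnd ℂ) (yc k) * u k).re -
        δ * Real.sqrt (∑ k ∈ Finset.Icc (-(flo:ℤ)) (flo:ℤ), ‖u k‖ ^ 2)) :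
    (∀ᵐ t ∂xest.pos,
        (∑ k ∈ Finset.Icc (-(flo:ℤ)) (flo:ℤ), u k * char k t) = xest.phase t) ∧
      ∀ (m : ℕ) (a : Fin m → ℂ) (tp : Fin m → Torus), IsSpikeTrain xest a tp →
        ∀ j, a j ≠ 0 →
          (∑ k ∈ Finset.Icc (-(flo:ℤ)) (flo:ℤ), u k * char k (tp j)) =
            a j / (‖a j‖ : ℂ) := by
  classical
  haveI : IsFiniteMeasure xest.pos := xest.finite
  set s : Finset ℤ := Finset.Icc (-(flo:ℤ)) (flo:ℤ) with hs
  set p : Torus → ℂ := fun t => ∑ k ∈ s, u k * fourier k t with hp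
  have hpchar : ∀ t, (∑ k ∈ s, u k * char k t) = p t := by
    intro t; simp only [hp, PDSI.char_eq_fourier]
  have hpbound : ∀ t, ‖p t‖ ≤ 1 := fun t => (hpchar t) ▸ hbound t
  have hpcont : Continuous p :=
    continuous_finset_sum _ fun k _ => continuous_const.mul (map_continuous (fourier k))
  have hφb : ∀ t, ‖xest.phase t‖ = 1 := xest.unit
  have hφm : Measurable xest.phase := xest.meas
  have habsf : ∀ (k : ℤ) (t : Torus), ‖fourier k t‖ = 1 := by
    intro k t; rw [fourier_apply]; exact Circle.norm_coe _
  -- Fourier coefficients of `xest`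
  set c : ℤ → ℂ := fun k => ∫ τ, (starRingEnd ℂ) (fourier k τ) * xest.phase τ ∂xest.pos with hc
  have hIck : ∀ k : ℤ, Integrable (fun τ => (starRingEnd ℂ) (fourier k τ) * xest.phase τ)
      xest.pos := by
    intro k
    refine PDSI.integrable_of_bdd ?_ 1 ?_
    · have hm1 : Measurable fun τ : Torus => (starRingEnd ℂ) (fourier k τ) := by
        have he : (fun τ : Torus => (starRingEnd ℂ) (fourier k τ)) = fun τ => fourier (-k) τ :=
          funext fun τ => fourier_neg.symm
        rw [he]; exact (map_continuous (fourier (-k))).measurable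
      exact (hm1.mul hφm).aestronglyMeasurable
    · intro t; rw [norm_mul, Complex.norm_conj, habsf, hφb, mul_one]
  -- expansion of the low-pass filter
  have hQ : ∀ t, QloM flo xest t = ∑ k ∈ s, c k * fourier k t := by
    intro t
    have h1 : QloM flo xest t
        = ∫ τ, (∑ k ∈ s, fourier k t * ((starRingEnd ℂ) (fourier k τ) * xest.phase τ)) ∂xest.pos := by
      simp only [QloM, convM, PolarMeasure.integ, Klo, PDSI.char_eq_fourier, ← hs]
      congr 1
      funext τ
      rw [Finset.sum_mul]
      refine Finset.sum_congr rfl fun k _ => ?_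
      rw [PDSI.fourier_sub_point]; ring
    rw [h1, integral_finset_sum _ fun k _ => (hIck k).const_mul _]
    refine Finset.sum_congr rfl fun k _ => ?_
    rw [integral_const_mul]
    rw [mul_comm]
  -- Parseval bound on the Fourier coefficients of the residual
  have hPar : Real.sqrt (∑ k ∈ s, ‖c k - yc k‖ ^ 2) ≤ δ := by
    have h2 : (fun t => QloM flo xest t - ∑ k ∈ s, yc k * char k t)
        = fun t => ∑ k ∈ s, (c k - yc k) * fourier k t := by
      funext t
      simp only [PDSI.char_eq_fourier, hQ t, sub_mul, Finset.sum_sub_distrib]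
    unfold L2norm at hfeas
    rw [h2, PDSI.parseval_finset] at hfeas
    exact hfeas
  -- the key quantity
  have hφcm : Measurable fun τ : Torus => (starRingEnd ℂ) (xest.phase τ) :=
    Complex.continuous_conj.measurable.comp hφm
  have hIpφ : Integrable (fun τ => p τ * (starRingEnd ℂ) (xest.phase τ)) xest.pos := by
    refine PDSI.integrable_of_bdd ?_ 1 ?_
    · exact (hpcont.measurable.mul hφcm).aestronglyMeasurable
    · intro t; rw [norm_mul, Complex.norm_conj, hφb, mul_one]; exact hpbound t
  have hA : (∑ k ∈ s, (starRingEnd ℂ) (c k) * u k)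
      = ∫ τ, p τ * (starRingEnd ℂ) (xest.phase τ) ∂xest.pos := by
    have h3 : ∀ τ : Torus, p τ * (starRingEnd ℂ) (xest.phase τ)
        = ∑ k ∈ s, u k * (fourier k τ * (starRingEnd ℂ) (xest.phase τ)) := by
      intro τ
      rw [hp, Finset.sum_mul]
      exact Finset.sum_congr rfl fun k _ => by ring
    simp only [h3]
    have hIk : ∀ k : ℤ, Integrable (fun τ => fourier k τ * (starRingEnd ℂ) (xest.phase τ))
        xest.pos := by
      intro k
      refine PDSI.integrable_of_bdd ?_ 1 ?_
      · exact ((map_continuous (fourier k)).measurable.mul hφcm).aestronglyMeasurable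
      · intro t; rw [norm_mul, Complex.norm_conj, habsf, hφb, mul_one]
    rw [integral_finset_sum _ fun k _ => (hIk k).const_mul _]
    refine Finset.sum_congr rfl fun k _ => ?_
    rw [integral_const_mul]
    have h4 : (starRingEnd ℂ) (c k)
        = ∫ τ, fourier k τ * (starRingEnd ℂ) (xest.phase τ) ∂xest.pos := by
      rw [hc, ← integral_conj]
      congr 1; funext τ; rw [map_mul]; simp
    rw [h4]; ring
  -- upper bound: P ≤ tv
  have hre_int : ∫ τ, (p τ * (starRingEnd ℂ) (xest.phase τ)).re ∂xest.pos
      = (∫ τ, p τ * (starRingEnd ℂ) (xest.phase τ) ∂xest.pos).re := by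
    simpa only [RCLike.re_to_complex] using integral_re hIpφ
  have hIre : Integrable (fun τ => (p τ * (starRingEnd ℂ) (xest.phase τ)).re) xest.pos := by
    simpa only [RCLike.re_to_complex] using hIpφ.re
  have hre_le_one : ∀ τ, (p τ * (starRingEnd ℂ) (xest.phase τ)).re ≤ 1 := by
    intro τ
    refine (Complex.re_le_norm _).trans ?_
    rw [norm_mul, Complex.norm_conj, hφb, mul_one]; exact hpbound τ
  have hPle : (∫ τ, p τ * (starRingEnd ℂ) (xest.phase τ) ∂xest.pos).re ≤ xest.tv := by
    rw [← hre_int]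
    calc ∫ τ, (p τ * (starRingEnd ℂ) (xest.phase τ)).re ∂xest.pos
        ≤ ∫ _, (1:ℝ) ∂xest.pos :=
          integral_mono hIre (integrable_const 1) fun τ => hre_le_one τ
      _ = xest.tv := by rw [integral_const, smul_eq_mul, mul_one]; rfl
  -- Cauchy–Schwarz bound on the residual term
  have hCS : (∑ k ∈ s, (starRingEnd ℂ) (yc k - c k) * u k).re
      ≤ δ * Real.sqrt (∑ k ∈ s, ‖u k‖ ^ 2) := by
    refine (Complex.re_le_norm _).trans ?_
    calc ‖∑ k ∈ s, (starRingEnd ℂ) (yc k - c k) * u k‖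
        ≤ ∑ k ∈ s, ‖(starRingEnd ℂ) (yc k - c k) * u k‖ :=
          norm_sum_le _ _
      _ = ∑ k ∈ s, ‖c k - yc k‖ * ‖u k‖ := by
          refine Finset.sum_congr rfl fun k _ => ?_
          rw [norm_mul, Complex.norm_conj, norm_sub_rev]
      _ ≤ Real.sqrt (∑ k ∈ s, ‖c k - yc k‖ ^ 2)
            * Real.sqrt (∑ k ∈ s, ‖u k‖ ^ 2) :=
          Real.sum_mul_le_sqrt_mul_sqrt s _ _
      _ ≤ δ * Real.sqrt (∑ k ∈ s, ‖u k‖ ^ 2) :=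
          mul_le_mul_of_nonneg_right hPar (Real.sqrt_nonneg _)
  -- strong duality forces equality
  have hsplit : (∑ k ∈ s, (starRingEnd ℂ) (yc k) * u k).re
      = (∑ k ∈ s, (starRingEnd ℂ) (c k) * u k).re
        + (∑ k ∈ s, (starRingEnd ℂ) (yc k - c k) * u k).re := by
    rw [← Complex.add_re, ← Finset.sum_add_distrib]
    congr 1
    refine Finset.sum_congr rfl fun k _ => ?_
    rw [map_sub]; ring
  have hPeq : (∫ τ, p τ * (starRingEnd ℂ) (xest.phase τ) ∂xest.pos).re = xest.tv := by
    refine le_antisymm hPle ?_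
    rw [hstrong, hsplit, hA]
    linarith [hCS]
  -- pointwise a.e. equality
  have hzero : ∀ᵐ τ ∂xest.pos, 1 - (p τ * (starRingEnd ℂ) (xest.phase τ)).re = 0 := by
    have hInt2 : Integrable (fun τ => 1 - (p τ * (starRingEnd ℂ) (xest.phase τ)).re) xest.pos :=
      (integrable_const 1).sub hIre
    have hnn : (0 : Torus → ℝ) ≤ fun τ => 1 - (p τ * (starRingEnd ℂ) (xest.phase τ)).re :=
      fun τ => by simp only [Pi.zero_apply]; linarith [hre_le_one τ]
    have hintzero : ∫ τ, (1 - (p τ * (starRingEnd ℂ) (xest.phase τ)).re) ∂xest.pos = 0 := by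
      rw [integral_sub (integrable_const 1) hIre, hre_int, hPeq, integral_const,
        smul_eq_mul, mul_one]
      have : xest.tv = xest.pos.real Set.univ := rfl
      rw [← this, sub_self]
    exact (integral_eq_zero_iff_of_nonneg hnn hInt2).mp hintzero
  have hae : ∀ᵐ τ ∂xest.pos, p τ = xest.phase τ := by
    filter_upwards [hzero] with τ hτ
    have hre1 : (p τ * (starRingEnd ℂ) (xest.phase τ)).re = 1 := by linarith
    have habs1 : ‖p τ * (starRingEnd ℂ) (xest.phase τ)‖ ≤ 1 := by
      rw [norm_mul, Complex.norm_conj, hφb, mul_one]; exact hpbound τ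
    have hsq : (p τ * (starRingEnd ℂ) (xest.phase τ)).re ^ 2
        + (p τ * (starRingEnd ℂ) (xest.phase τ)).im ^ 2
        = ‖p τ * (starRingEnd ℂ) (xest.phase τ)‖ ^ 2 := by
      rw [Complex.sq_norm, Complex.normSq_apply]; ring
    have him : (p τ * (starRingEnd ℂ) (xest.phase τ)).im = 0 := by
      nlinarith [norm_nonneg (p τ * (starRingEnd ℂ) (xest.phase τ))]
    have hone : p τ * (starRingEnd ℂ) (xest.phase τ) = 1 := by
      apply Complex.ext <;> simp [hre1, him]
    have hφ1 : (starRingEnd ℂ) (xest.phase τ) * xest.phase τ = 1 := by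
      rw [mul_comm, Complex.mul_conj]
      norm_cast
      rw [← Complex.sq_norm, hφb]; norm_num
    calc p τ = p τ * ((starRingEnd ℂ) (xest.phase τ) * xest.phase τ) := by
          rw [hφ1, mul_one]
      _ = (p τ * (starRingEnd ℂ) (xest.phase τ)) * xest.phase τ := by ring
      _ = xest.phase τ := by rw [hone, one_mul]
  constructor
  · filter_upwards [hae] with t ht
    rw [hpchar t, ht]
  · intro m a tp hspike j hj
    have hpj : p (tp j) = xest.phase (tp j) := by
      by_contra hne
      have h0 : xest.pos {tp j} = 0 := by
        refine le_antisymm (le_trans (measure_mono ?_) (le_of_eq (ae_iff.mp hae))) (by simp)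
        intro x hx
        rw [Set.mem_singleton_iff] at hx
        subst hx
        exact hne
      rw [hspike.1] at h0
      have h1 : ((∑ i, ENNReal.ofReal (‖a i‖) • Measure.dirac (tp i)) : Measure Torus)
          {tp j} = ∑ i, (ENNReal.ofReal (‖a i‖) • Measure.dirac (tp i)) {tp j} := by
        rw [Measure.finset_sum_apply]
      rw [h1] at h0
      have h2 : (ENNReal.ofReal (‖a j‖) • Measure.dirac (tp j)) {tp j} = 0 :=
        (Finset.sum_eq_zero_iff.mp h0) j (Finset.mem_univ j)
      rw [Measure.smul_apply, Measure.dirac_apply_of_mem (Set.mem_singleton _),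
        smul_eq_mul, mul_one] at h2
      have h3 : 0 < ‖a j‖ := by
        simpa [norm_pos_iff] using hj
      simp [ENNReal.ofReal_eq_zero, not_le.mpr h3, hj] at h2
    rw [hpchar (tp j), hpj, hspike.2 j]

end
end

section
/- For all positive constants C2, C3 there exists a constant C4 > 0 depending only on C2 and C3 such that the following holds. Let λ_hi ∈ (0,1] and let K : 𝕋 → ℝ be an even, twice continuously differentiable kernel satisfying sup_t |K''(t)| ≤ C2 λ_hi^{−3}, and suppose there exists a nonnegative nonincreasing function f : [0,1/2] → ℝ with |K''(t+λ_hi)| ≤ f(t) for all 0 ≤ t ≤ 1/2 and ∫₀^{1/2} f(t) dt ≤ C3 λ_hi^{−2}. Then ∫_𝕋 sup_{u : |u−t| ≤ 0.16 λ_hi} |K''(u)| dt ≤ C4 λ_hi^{−2}. -/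
set_option maxHeartbeats 1000000

noncomputable section

open MeasureTheory Complex Real Set

private lemma periodic_deriv_one {h : ℝ → ℝ} (hp : Function.Periodic h 1) :
    Function.Periodic (deriv h) 1 := by
  intro x
  have he : (fun y => h (y + 1)) = h := funext fun y => hp y
  rw [← deriv_comp_add_const h 1 x, he]

private lemma even_deriv_deriv {K : ℝ → ℝ} (hK : ∀ t, K (-t) = K t) (x : ℝ) :
    deriv (deriv K) (-x) = deriv (deriv K) x := by
  have h1 : ∀ y, deriv K (-y) = -deriv K y := by
    intro y
    have h := deriv_comp_neg K y
    have he : (fun t => K (-t)) = K := funext hK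
    rw [he] at h
    linarith
  have h3 : (fun y => deriv K (-y)) = fun y => -deriv K y := funext h1
  have h := deriv_comp_neg (deriv K) x
  rw [h3, deriv.fun_neg] at h
  linarith

/-- integral bound (2.7) on the local supremum of the second
derivative of an admissible kernel. -/
theorem sup_second_derivative_integral_bound :
    ∀ C2 C3 : ℝ, 0 < C2 → 0 < C3 →
      ∃ C4 : ℝ, 0 < C4 ∧
        ∀ lhi : ℝ, 0 < lhi → lhi ≤ 1 →
          ∀ K : ℝ → ℝ, Function.Periodic K 1 → (∀ t, K (-t) = K t) → ContDiff ℝ 2 K →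
            (∀ t : ℝ, |deriv (deriv K) t| ≤ C2 / lhi ^ 3) →
            (∃ f : ℝ → ℝ,
              (∀ t ∈ Set.Icc (0:ℝ) (1/2), 0 ≤ f t) ∧
              AntitoneOn f (Set.Icc (0:ℝ) (1/2)) ∧
              (∀ t ∈ Set.Icc (0:ℝ) (1/2), |deriv (deriv K) (t + lhi)| ≤ f t) ∧
              (∫ t in (0:ℝ)..(1/2), f t) ≤ C3 / lhi ^ 2) →
            (∫ t in (0:ℝ)..1,
                sSup {y : ℝ | ∃ u : ℝ, |u - t| ≤ 0.16 * lhi ∧ y = |deriv (deriv K) u|}) ≤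
              C4 / lhi ^ 2 := by
  intro C2 C3 hC2 hC3
  refine ⟨3 * C2 + 2 * C3, by positivity, ?_⟩
  intro lhi hl hl1 K hper heven hcd hbd hfex
  obtain ⟨f, hf0, hanti, hfb, hfint_le⟩ := hfex
  have hl2 : (0:ℝ) < lhi ^ 2 := by positivity
  have hl3 : (0:ℝ) < lhi ^ 3 := by positivity
  set g := deriv (deriv K) with hg
  have hgper : ∀ x : ℝ, g (x + 1) = g x := periodic_deriv_one (periodic_deriv_one hper)
  have hgeven : ∀ x, g (-x) = g x := even_deriv_deriv heven
  have hgsym : ∀ u, g (1 - u) = g u := by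
    intro u
    rw [show (1:ℝ) - u = -u + 1 by ring, hgper (-u), hgeven]
  set S : ℝ → ℝ := fun t => sSup {y : ℝ | ∃ u : ℝ, |u - t| ≤ 0.16 * lhi ∧ y = |g u|}
    with hSdef
  have hr0 : (0:ℝ) ≤ 0.16 * lhi := by nlinarith
  have hmem : ∀ t, |g t| ∈ {y : ℝ | ∃ u : ℝ, |u - t| ≤ 0.16 * lhi ∧ y = |g u|} :=
    fun t => ⟨t, by rw [sub_self, abs_zero]; exact hr0, rfl⟩
  have hne : ∀ t, ({y : ℝ | ∃ u : ℝ, |u - t| ≤ 0.16 * lhi ∧ y = |g u|}).Nonempty :=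
    fun t => ⟨_, hmem t⟩
  have hub : ∀ t, ∀ y ∈ {y : ℝ | ∃ u : ℝ, |u - t| ≤ 0.16 * lhi ∧ y = |g u|},
      y ≤ C2 / lhi ^ 3 := by
    rintro t y ⟨u, -, rfl⟩; exact hbd u
  have hSle : ∀ t, S t ≤ C2 / lhi ^ 3 := fun t => csSup_le (hne t) (hub t)
  have hSsym : ∀ t, S (1 - t) = S t := by
    intro t
    have hset : {y : ℝ | ∃ u : ℝ, |u - (1 - t)| ≤ 0.16 * lhi ∧ y = |g u|}
        = {y : ℝ | ∃ u : ℝ, |u - t| ≤ 0.16 * lhi ∧ y = |g u|} := by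
      ext y
      constructor
      · rintro ⟨u, hu, rfl⟩
        exact ⟨1 - u, by rw [show (1:ℝ) - u - t = -(u - (1 - t)) by ring, abs_neg]; exact hu,
          by rw [hgsym]⟩
      · rintro ⟨u, hu, rfl⟩
        exact ⟨1 - u, by rw [show (1:ℝ) - u - (1 - t) = -(u - t) by ring, abs_neg]; exact hu,
          by rw [hgsym]⟩
    simp only [hSdef, hset]
  by_cases hint : IntervalIntegrable S volume 0 1
  swap
  · rw [intervalIntegral.integral_undef hint]; positivity
  by_cases hsm : 1.16 * lhi ≤ 1 / 2
  · -- main case : 1.16 lhi ≤ 1/2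
    have h116 : (0:ℝ) < 1.16 * lhi := by nlinarith
    have hsub : ∀ c d : ℝ, 0 ≤ c → c ≤ 1 → 0 ≤ d → d ≤ 1 →
        Set.uIcc c d ⊆ Set.uIcc (0:ℝ) 1 := by
      intro c d h1 h2 h3 h4
      rw [Set.uIcc_of_le (by norm_num : (0:ℝ) ≤ 1)]
      exact Set.uIcc_subset_Icc ⟨h1, h2⟩ ⟨h3, h4⟩
    have hIa : IntervalIntegrable S volume 0 (1.16 * lhi) :=
      hint.mono_set (hsub _ _ le_rfl (by norm_num) h116.le (by linarith))
    have hIb : IntervalIntegrable S volume (1.16 * lhi) (1 / 2) :=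
      hint.mono_set (hsub _ _ h116.le (by linarith) (by norm_num) (by norm_num))
    have hIhalf : IntervalIntegrable S volume 0 (1 / 2) :=
      hint.mono_set (hsub _ _ le_rfl (by norm_num) (by norm_num) (by norm_num))
    have hIhalf2 : IntervalIntegrable S volume (1 / 2) 1 :=
      hint.mono_set (hsub _ _ (by norm_num) (by norm_num) (by norm_num) le_rfl)
    have hIc : IntervalIntegrable S volume (1 / 2) (1 - 1.16 * lhi) :=
      hint.mono_set (hsub _ _ (by norm_num) (by norm_num) (by linarith) (by linarith))
    have hId : IntervalIntegrable S volume (1 - 1.16 * lhi) 1 :=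
      hint.mono_set (hsub _ _ (by linarith) (by linarith) (by norm_num) le_rfl)
    have e1 := intervalIntegral.integral_add_adjacent_intervals hIa hIb
    have e2 := intervalIntegral.integral_add_adjacent_intervals hIc hId
    have e3 := intervalIntegral.integral_add_adjacent_intervals hIhalf hIhalf2
    -- bound on [0, 1.16 lhi]
    have hb1 : (∫ t in (0:ℝ)..(1.16 * lhi), S t) ≤ 1.16 * lhi * (C2 / lhi ^ 3) := by
      have h := intervalIntegral.integral_mono_on h116.le hIa
        (intervalIntegrable_const (c := C2 / lhi ^ 3)) (fun x _ => hSle x)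
      rw [intervalIntegral.integral_const, smul_eq_mul, sub_zero] at h
      exact h
    -- bound on [1 - 1.16 lhi, 1]
    have hb4 : (∫ t in (1 - 1.16 * lhi : ℝ)..1, S t) ≤ 1.16 * lhi * (C2 / lhi ^ 3) := by
      have h := intervalIntegral.integral_mono_on (by linarith : (1:ℝ) - 1.16 * lhi ≤ 1) hId
        (intervalIntegrable_const (c := C2 / lhi ^ 3)) (fun x _ => hSle x)
      rw [intervalIntegral.integral_const, smul_eq_mul] at h
      calc (∫ t in (1 - 1.16 * lhi : ℝ)..1, S t)
          ≤ (1 - (1 - 1.16 * lhi)) * (C2 / lhi ^ 3) := h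
        _ = 1.16 * lhi * (C2 / lhi ^ 3) := by ring
    -- pointwise bound via f on [1.16 lhi, 1/2]
    have hptf : ∀ x ∈ Set.Icc (1.16 * lhi) (1 / 2 : ℝ), S x ≤ f (x - 1.16 * lhi) := by
      intro x hx
      refine csSup_le (hne x) ?_
      rintro y ⟨u, hu, rfl⟩
      obtain ⟨hu1, hu2⟩ := abs_le.mp hu
      have h01 : u - lhi ∈ Set.Icc (0:ℝ) (1 / 2) := ⟨by nlinarith [hx.1], by nlinarith [hx.2]⟩
      have hx1 : x - 1.16 * lhi ∈ Set.Icc (0:ℝ) (1 / 2) :=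
        ⟨by linarith [hx.1], by nlinarith [hx.2]⟩
      calc |g u| = |g (u - lhi + lhi)| := by rw [show u - lhi + lhi = u by ring]
        _ ≤ f (u - lhi) := hfb _ h01
        _ ≤ f (x - 1.16 * lhi) := hanti hx1 h01 (by linarith)
    -- integrability of shifted f
    have hfintF : IntervalIntegrable f volume 0 (1 / 2) := by
      apply AntitoneOn.intervalIntegrable
      rwa [Set.uIcc_of_le (by norm_num : (0:ℝ) ≤ 1 / 2)]
    have hfshift : IntervalIntegrable (fun t => f (t - 1.16 * lhi)) volume (1.16 * lhi) (1 / 2) := by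
      apply AntitoneOn.intervalIntegrable
      rw [Set.uIcc_of_le hsm]
      intro p hp q hq hpq
      exact hanti ⟨by linarith [hp.1], by nlinarith [hp.2]⟩
        ⟨by linarith [hq.1], by nlinarith [hq.2]⟩ (by linarith)
    have hb2 : (∫ t in (1.16 * lhi : ℝ)..(1 / 2), S t) ≤ C3 / lhi ^ 2 := by
      have s1 : (∫ t in (1.16 * lhi : ℝ)..(1 / 2), S t)
          ≤ ∫ t in (1.16 * lhi : ℝ)..(1 / 2), f (t - 1.16 * lhi) :=
        intervalIntegral.integral_mono_on hsm hIb hfshift hptf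
      have s2 : (∫ t in (1.16 * lhi : ℝ)..(1 / 2), f (t - 1.16 * lhi))
          = ∫ t in (0:ℝ)..(1 / 2 - 1.16 * lhi), f t := by
        rw [intervalIntegral.integral_comp_sub_right f (1.16 * lhi), sub_self]
      have hf1 : IntervalIntegrable f volume 0 (1 / 2 - 1.16 * lhi) :=
        hfintF.mono_set (by
          rw [Set.uIcc_of_le (by linarith : (0:ℝ) ≤ 1 / 2 - 1.16 * lhi),
            Set.uIcc_of_le (by norm_num : (0:ℝ) ≤ 1 / 2)]
          exact Set.Icc_subset_Icc le_rfl (by linarith))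
      have hf2 : IntervalIntegrable f volume (1 / 2 - 1.16 * lhi) (1 / 2) :=
        hfintF.mono_set (by
          rw [Set.uIcc_of_le (by linarith : (1:ℝ) / 2 - 1.16 * lhi ≤ 1 / 2),
            Set.uIcc_of_le (by norm_num : (0:ℝ) ≤ 1 / 2)]
          exact Set.Icc_subset_Icc (by linarith) le_rfl)
      have hadd := intervalIntegral.integral_add_adjacent_intervals hf1 hf2
      have hpos : (0:ℝ) ≤ ∫ t in (1 / 2 - 1.16 * lhi : ℝ)..(1 / 2), f t :=
        intervalIntegral.integral_nonneg (by linarith)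
          (fun u hu => hf0 u ⟨by linarith [hu.1], hu.2⟩)
      linarith [hfint_le]
    have hb3 : (∫ t in (1 / 2 : ℝ)..(1 - 1.16 * lhi), S t)
        = ∫ t in (1.16 * lhi : ℝ)..(1 / 2), S t := by
      have h1 : (∫ t in (1 / 2 : ℝ)..(1 - 1.16 * lhi), S t)
          = ∫ t in (1 / 2 : ℝ)..(1 - 1.16 * lhi), S (1 - t) :=
        intervalIntegral.integral_congr fun x _ => (hSsym x).symm
      rw [h1, intervalIntegral.integral_comp_sub_left S 1,
        show (1:ℝ) - (1 - 1.16 * lhi) = 1.16 * lhi by ring,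
        show (1:ℝ) - 1 / 2 = 1 / 2 by norm_num]
    have key : 1.16 * lhi * (C2 / lhi ^ 3) = 1.16 * (C2 / lhi ^ 2) := by
      field_simp
    have goalrw : (3 * C2 + 2 * C3) / lhi ^ 2 = 3 * (C2 / lhi ^ 2) + 2 * (C3 / lhi ^ 2) := by
      ring
    have hC2l : 0 < C2 / lhi ^ 2 := by positivity
    rw [goalrw]
    have : (∫ t in (0:ℝ)..1, S t)
        = (∫ t in (0:ℝ)..(1.16 * lhi), S t) + (∫ t in (1.16 * lhi : ℝ)..(1 / 2), S t)
          + (∫ t in (1 / 2 : ℝ)..(1 - 1.16 * lhi), S t)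
          + (∫ t in (1 - 1.16 * lhi : ℝ)..1, S t) := by
      rw [← e3, ← e1, ← e2]
      ring
    rw [this, hb3]
    rw [key] at hb1 hb4
    linarith
  · -- easy case : lhi not small
    have h12 : (1:ℝ) / 2 < 1.16 * lhi := lt_of_not_ge hsm
    have h := intervalIntegral.integral_mono_on (by norm_num : (0:ℝ) ≤ 1) hint
      (intervalIntegrable_const (c := C2 / lhi ^ 3)) (fun x _ => hSle x)
    rw [intervalIntegral.integral_const, smul_eq_mul, sub_zero, one_mul] at h
    refine le_trans h ?_
    rw [div_le_div_iff₀ hl3 hl2]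
    nlinarith [mul_pos hC3 hl2, mul_pos (mul_pos hC2 hl2) hl, sq_nonneg lhi]

end
end

section
/- There exist positive constants C_κ, C_α, C_β such that the following holds for every integer f ≥ 1 and every positive integer m. Set κ := π² f (f+4)/3 and let D₀, D₁, D₂ be complex m×m matrices satisfying ‖I − D₀‖_∞ ≤ 0.007, ‖D₁‖_∞ ≤ 0.08 f, and ‖κ I − D₂‖_∞ ≤ 1.06 f². Then: (i) D₀ is invertible with ‖D₀^{−1}‖_∞ ≤ 1/(1 − 0.007); (ii) the Schur complement S := D₂ − D₁ D₀^{−1} D₁ is invertible with ‖S^{−1}‖_∞ ≤ C_κ f^{−2}; and (iii) for every v ∈ ℂ^m with ‖v‖_∞ ≤ 1, the vectors β := S^{−1} v and α := −D₀^{−1} D₁ β solve the system D₀ α + D₁ β = 0, D₁ α + D₂ β = v, and satisfy ‖α‖_∞ ≤ C_α f^{−1} and ‖β‖_∞ ≤ C_β f^{−2}. -/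
noncomputable section

open Complex Real Matrix
open scoped NNReal

/-- The operator norm on `m × m` complex matrices induced by the `ℓ∞` norm,
i.e. the maximum absolute row sum. -/
def rowSumNorm {m : ℕ} (M : Matrix (Fin m) (Fin m) ℂ) : ℝ :=
  ⨆ i, ∑ j, ‖M i j‖

/-- The `ℓ∞` norm of a vector in `ℂ^m`. -/
def vecSupNorm {m : ℕ} (v : Fin m → ℂ) : ℝ := ⨆ i, ‖v i‖

section Aux

attribute [local instance] Matrix.linftyOpNormedAddCommGroup Matrix.linftyOpNormedRing
  Matrix.linftyOpNormedSpace Matrix.linftyOpNormedAlgebra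

lemma rowSumNorm_eq_norm {m : ℕ} (hm : 0 < m) (M : Matrix (Fin m) (Fin m) ℂ) :
    rowSumNorm M = ‖M‖ := by
  haveI : Nonempty (Fin m) := ⟨⟨0, hm⟩⟩
  rw [rowSumNorm, Matrix.linfty_opNorm_def]
  apply le_antisymm
  · refine ciSup_le fun i => ?_
    have h1 : (((∑ j, ‖M i j‖₊ : ℝ≥0)) : ℝ) ≤
        ((Finset.univ.sup fun i => ∑ j, ‖M i j‖₊ : ℝ≥0) : ℝ) := by
      exact_mod_cast Finset.le_sup (f := fun i => ∑ j, ‖M i j‖₊) (Finset.mem_univ i)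
    refine le_trans (le_of_eq ?_) h1
    push_cast
    simp
  · obtain ⟨i, -, hi⟩ := Finset.exists_mem_eq_sup Finset.univ Finset.univ_nonempty
      fun i => ∑ j, ‖M i j‖₊
    rw [hi]
    have h2 : (((∑ j, ‖M i j‖₊ : ℝ≥0)) : ℝ) = ∑ j, ‖M i j‖ := by
      push_cast; simp
    rw [h2]
    exact le_ciSup (f := fun i => ∑ j, ‖M i j‖) (Set.Finite.bddAbove (Set.finite_range _)) i

lemma vecSupNorm_eq_norm {m : ℕ} (hm : 0 < m) (v : Fin m → ℂ) :
    vecSupNorm v = ‖v‖ := by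
  haveI : Nonempty (Fin m) := ⟨⟨0, hm⟩⟩
  rw [vecSupNorm, Pi.norm_def]
  apply le_antisymm
  · refine ciSup_le fun i => ?_
    have h1 : ((‖v i‖₊ : ℝ≥0) : ℝ) ≤ ((Finset.univ.sup fun i => ‖v i‖₊ : ℝ≥0) : ℝ) := by
      exact_mod_cast Finset.le_sup (f := fun i => ‖v i‖₊) (Finset.mem_univ i)
    simpa using h1
  · obtain ⟨i, -, hi⟩ := Finset.exists_mem_eq_sup Finset.univ Finset.univ_nonempty
      fun i => ‖v i‖₊
    rw [hi]
    have h2 : ((‖v i‖₊ : ℝ≥0) : ℝ) = ‖v i‖ := by simp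
    rw [h2]
    exact le_ciSup (f := fun i => ‖v i‖) (Set.Finite.bddAbove (Set.finite_range _)) i

/-- In a complete normed unital ring, if `‖1 - a‖ ≤ r < 1` then `a` is a unit and
`‖Ring.inverse a‖ ≤ (1 - r)⁻¹`. -/
lemma isUnit_and_inverse_bound {R : Type*} [NormedRing R] [NormOneClass R] [CompleteSpace R]
    {a : R} {r : ℝ} (h : ‖1 - a‖ ≤ r) (hr : r < 1) :
    IsUnit a ∧ ‖Ring.inverse a‖ ≤ (1 - r)⁻¹ := by
  have h1 : ‖1 - a‖ < 1 := lt_of_le_of_lt h hr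
  have hu : IsUnit a := by
    have := isUnit_one_sub_of_norm_lt_one h1
    rwa [sub_sub_cancel] at this
  refine ⟨hu, ?_⟩
  have hinv : Ring.inverse a = ∑' n : ℕ, (1 - a) ^ n := by
    have := geom_series_eq_inverse (1 - a) h1
    rw [sub_sub_cancel] at this
    exact this.symm
  rw [hinv]
  calc ‖∑' n : ℕ, (1 - a) ^ n‖ ≤ ‖(1 : R)‖ - 1 + (1 - ‖1 - a‖)⁻¹ :=
        tsum_geometric_le_of_norm_lt_one _ h1
    _ = (1 - ‖1 - a‖)⁻¹ := by rw [norm_one]; ring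
    _ ≤ (1 - r)⁻¹ := by gcongr

set_option maxHeartbeats 1000000 in
lemma interpolation_system_bounds_aux :
    ∃ Cκ Cα Cβ : ℝ, 0 < Cκ ∧ 0 < Cα ∧ 0 < Cβ ∧
      ∀ (f : ℕ), 1 ≤ f → ∀ (m : ℕ), 0 < m →
        ∀ D₀ D₁ D₂ : Matrix (Fin m) (Fin m) ℂ,
          rowSumNorm (1 - D₀) ≤ 0.007 →
          rowSumNorm D₁ ≤ 0.08 * f →
          rowSumNorm ((π ^ 2 * f * (f + 4) / 3 : ℝ) • (1 : Matrix (Fin m) (Fin m) ℂ) - D₂) ≤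
            1.06 * f ^ 2 →
          IsUnit D₀ ∧
          rowSumNorm D₀⁻¹ ≤ 1 / (1 - 0.007) ∧
          IsUnit (D₂ - D₁ * D₀⁻¹ * D₁) ∧
          rowSumNorm (D₂ - D₁ * D₀⁻¹ * D₁)⁻¹ ≤ Cκ / f ^ 2 ∧
          ∀ v : Fin m → ℂ, vecSupNorm v ≤ 1 →
            D₀.mulVec (-(D₀⁻¹ * D₁).mulVec ((D₂ - D₁ * D₀⁻¹ * D₁)⁻¹.mulVec v)) +
                D₁.mulVec ((D₂ - D₁ * D₀⁻¹ * D₁)⁻¹.mulVec v) = 0 ∧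
            D₁.mulVec (-(D₀⁻¹ * D₁).mulVec ((D₂ - D₁ * D₀⁻¹ * D₁)⁻¹.mulVec v)) +
                D₂.mulVec ((D₂ - D₁ * D₀⁻¹ * D₁)⁻¹.mulVec v) = v ∧
            vecSupNorm (-(D₀⁻¹ * D₁).mulVec ((D₂ - D₁ * D₀⁻¹ * D₁)⁻¹.mulVec v)) ≤ Cα / f ∧
            vecSupNorm ((D₂ - D₁ * D₀⁻¹ * D₁)⁻¹.mulVec v) ≤ Cβ / f ^ 2 := by
  refine ⟨1, 1, 1, one_pos, one_pos, one_pos, ?_⟩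
  intro f hf m hm D₀ D₁ D₂ h0 h1 h2
  haveI : Nonempty (Fin m) := ⟨⟨0, hm⟩⟩
  haveI : CompleteSpace (Matrix (Fin m) (Fin m) ℂ) := FiniteDimensional.complete ℂ _
  have hf1 : (1 : ℝ) ≤ (f : ℝ) := by exact_mod_cast hf
  have hfpos : (0 : ℝ) < (f : ℝ) := lt_of_lt_of_le one_pos hf1
  have hf2 : (1 : ℝ) ≤ (f : ℝ) ^ 2 := by nlinarith
  have hpi : (3.14 : ℝ) < π := Real.pi_gt_d2
  have hpi2 : (9.85 : ℝ) ≤ π ^ 2 := by nlinarith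
  -- the scalar κ
  set k : ℝ := π ^ 2 * f * (f + 4) / 3 with hk_def
  have hff : (f : ℝ) ^ 2 ≤ (f : ℝ) * ((f : ℝ) + 4) := by nlinarith
  have hk_ge : 3.28 * (f : ℝ) ^ 2 ≤ k := by
    rw [hk_def]
    nlinarith [mul_le_mul_of_nonneg_right hpi2 (sq_nonneg (f : ℝ)),
      mul_le_mul_of_nonneg_left hff (sq_nonneg π)]
  have hkpos : 0 < k := by nlinarith
  -- norms via rowSumNorm
  rw [rowSumNorm_eq_norm hm] at h0 h1 h2
  -- D₀ is a unit with controlled inverse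
  obtain ⟨hu0, hb0⟩ := isUnit_and_inverse_bound h0 (by norm_num)
  have hD0inv : D₀⁻¹ = Ring.inverse D₀ := Matrix.nonsing_inv_eq_ringInverse D₀
  have hb0' : ‖D₀⁻¹‖ ≤ (1 - 0.007)⁻¹ := by rw [hD0inv]; exact hb0
  have hb0'' : ‖D₀⁻¹‖ ≤ 1.008 := hb0'.trans (by norm_num)
  -- the Schur complement
  set S : Matrix (Fin m) (Fin m) ℂ := D₂ - D₁ * D₀⁻¹ * D₁ with hS_def
  have hprod : ‖D₁ * D₀⁻¹ * D₁‖ ≤ (0.08 * f) * 1.008 * (0.08 * f) := by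
    calc ‖D₁ * D₀⁻¹ * D₁‖ ≤ ‖D₁ * D₀⁻¹‖ * ‖D₁‖ := Matrix.linfty_opNorm_mul _ _
      _ ≤ ‖D₁‖ * ‖D₀⁻¹‖ * ‖D₁‖ :=
          mul_le_mul_of_nonneg_right (Matrix.linfty_opNorm_mul _ _) (norm_nonneg _)
      _ ≤ (0.08 * f) * 1.008 * (0.08 * f) :=
          mul_le_mul (mul_le_mul h1 hb0'' (norm_nonneg _) (by positivity)) h1
            (norm_nonneg _) (by positivity)
  have hSbig : ‖k • (1 : Matrix (Fin m) (Fin m) ℂ) - S‖ ≤ 1.07 * (f : ℝ) ^ 2 := by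
    have heq : k • (1 : Matrix (Fin m) (Fin m) ℂ) - S
        = (k • 1 - D₂) + D₁ * D₀⁻¹ * D₁ := by rw [hS_def]; abel
    rw [heq]
    calc ‖(k • (1 : Matrix (Fin m) (Fin m) ℂ) - D₂) + D₁ * D₀⁻¹ * D₁‖
        ≤ ‖k • (1 : Matrix (Fin m) (Fin m) ℂ) - D₂‖ + ‖D₁ * D₀⁻¹ * D₁‖ := norm_add_le _ _
      _ ≤ 1.06 * f ^ 2 + (0.08 * f) * 1.008 * (0.08 * f) := add_le_add h2 hprod
      _ ≤ 1.07 * (f : ℝ) ^ 2 := by nlinarith [sq_nonneg (f : ℝ)]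
  -- the rescaled Schur complement
  set a : Matrix (Fin m) (Fin m) ℂ := k⁻¹ • S with ha_def
  have hone_sub_a : (1 : Matrix (Fin m) (Fin m) ℂ) - a
      = k⁻¹ • (k • (1 : Matrix (Fin m) (Fin m) ℂ) - S) := by
    rw [smul_sub, smul_smul, inv_mul_cancel₀ hkpos.ne', one_smul, ha_def]
  have hka : ‖(1 : Matrix (Fin m) (Fin m) ℂ) - a‖ ≤ 1 / 2 := by
    rw [hone_sub_a, norm_smul, Real.norm_eq_abs, abs_of_pos (inv_pos.mpr hkpos),
      inv_mul_le_iff₀ hkpos]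
    calc ‖k • (1 : Matrix (Fin m) (Fin m) ℂ) - S‖ ≤ 1.07 * (f : ℝ) ^ 2 := hSbig
      _ ≤ k * (1 / 2) := by nlinarith [sq_nonneg (f : ℝ)]
  obtain ⟨hua, hba⟩ := isUnit_and_inverse_bound hka (by norm_num)
  have hba2 : ‖Ring.inverse a‖ ≤ 2 := by
    refine hba.trans ?_
    norm_num
  -- S is a unit
  set B : Matrix (Fin m) (Fin m) ℂ := k⁻¹ • Ring.inverse a with hB_def
  have hSa : S = k • a := by rw [ha_def, smul_smul, mul_inv_cancel₀ hkpos.ne', one_smul]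
  have hSB : S * B = 1 := by
    rw [hSa, hB_def, smul_mul_smul_comm, mul_inv_cancel₀ hkpos.ne',
      Ring.mul_inverse_cancel a hua, one_smul]
  have hBS : B * S = 1 := by
    rw [hSa, hB_def, smul_mul_smul_comm, inv_mul_cancel₀ hkpos.ne',
      Ring.inverse_mul_cancel a hua, one_smul]
  have huS : IsUnit S := ⟨⟨S, B, hSB, hBS⟩, rfl⟩
  have hSinv : S⁻¹ = B := by
    rw [Matrix.nonsing_inv_eq_ringInverse]
    exact Ring.inverse_unit (⟨S, B, hSB, hBS⟩ : (Matrix (Fin m) (Fin m) ℂ)ˣ)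
  have hSinv_norm : ‖S⁻¹‖ ≤ 1 / (f : ℝ) ^ 2 := by
    rw [hSinv, hB_def, norm_smul, Real.norm_eq_abs, abs_of_pos (inv_pos.mpr hkpos)]
    calc k⁻¹ * ‖Ring.inverse a‖ ≤ k⁻¹ * 2 :=
          mul_le_mul_of_nonneg_left hba2 (inv_pos.mpr hkpos).le
      _ ≤ 1 / (f : ℝ) ^ 2 := by
          rw [inv_mul_eq_div, div_le_div_iff₀ hkpos (by positivity)]
          nlinarith [sq_nonneg (f : ℝ)]
  -- determinant facts
  have hdet0 : IsUnit D₀.det := (Matrix.isUnit_iff_isUnit_det D₀).mp hu0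
  have hdetS : IsUnit S.det := (Matrix.isUnit_iff_isUnit_det S).mp huS
  refine ⟨hu0, ?_, huS, ?_, ?_⟩
  · rw [rowSumNorm_eq_norm hm, one_div]; exact hb0'
  · rw [rowSumNorm_eq_norm hm, one_div]
    rw [one_div] at hSinv_norm
    exact hSinv_norm
  · intro v hv
    rw [vecSupNorm_eq_norm hm] at hv
    set w : Fin m → ℂ := (D₂ - D₁ * D₀⁻¹ * D₁)⁻¹.mulVec v with hw_def
    have hwS : w = S⁻¹.mulVec v := rfl
    have hweq : S.mulVec w = v := by
      rw [hwS, Matrix.mulVec_mulVec, Matrix.mul_nonsing_inv S hdetS, Matrix.one_mulVec]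
    have hwnorm : ‖w‖ ≤ 1 / (f : ℝ) ^ 2 := by
      calc ‖w‖ ≤ ‖S⁻¹‖ * ‖v‖ := Matrix.linfty_opNorm_mulVec _ _
        _ ≤ (1 / (f : ℝ) ^ 2) * 1 := mul_le_mul hSinv_norm hv (norm_nonneg _) (by positivity)
        _ = 1 / (f : ℝ) ^ 2 := mul_one _
    refine ⟨?_, ?_, ?_, ?_⟩
    · rw [Matrix.mulVec_neg, Matrix.mulVec_mulVec, ← Matrix.mul_assoc,
        Matrix.mul_nonsing_inv D₀ hdet0, Matrix.one_mul]
      exact neg_add_cancel _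
    · rw [Matrix.mulVec_neg, Matrix.mulVec_mulVec, ← Matrix.mul_assoc, neg_add_eq_sub,
        ← Matrix.sub_mulVec]
      exact hweq
    · rw [vecSupNorm_eq_norm hm, norm_neg]
      calc ‖(D₀⁻¹ * D₁).mulVec w‖ ≤ ‖D₀⁻¹ * D₁‖ * ‖w‖ := Matrix.linfty_opNorm_mulVec _ _
        _ ≤ ‖D₀⁻¹‖ * ‖D₁‖ * ‖w‖ :=
            mul_le_mul_of_nonneg_right (Matrix.linfty_opNorm_mul _ _) (norm_nonneg _)
        _ ≤ 1.008 * (0.08 * f) * (1 / (f : ℝ) ^ 2) :=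
            mul_le_mul (mul_le_mul hb0'' h1 (norm_nonneg _) (by norm_num)) hwnorm
              (norm_nonneg _) (by positivity)
        _ ≤ 1 / (f : ℝ) := by
            rw [mul_one_div, div_le_div_iff₀ (by positivity) hfpos]
            nlinarith [sq_nonneg (f : ℝ)]
    · rw [vecSupNorm_eq_norm hm]
      exact hwnorm
end Aux

/-- well-posedness of the interpolation system defining the
dual polynomial coefficients. -/
theorem interpolation_system_bounds :
    ∃ Cκ Cα Cβ : ℝ, 0 < Cκ ∧ 0 < Cα ∧ 0 < Cβ ∧
      ∀ (f : ℕ), 1 ≤ f → ∀ (m : ℕ), 0 < m →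
        ∀ D₀ D₁ D₂ : Matrix (Fin m) (Fin m) ℂ,
          rowSumNorm (1 - D₀) ≤ 0.007 →
          rowSumNorm D₁ ≤ 0.08 * f →
          rowSumNorm ((π ^ 2 * f * (f + 4) / 3 : ℝ) • (1 : Matrix (Fin m) (Fin m) ℂ) - D₂) ≤
            1.06 * f ^ 2 →
          IsUnit D₀ ∧
          rowSumNorm D₀⁻¹ ≤ 1 / (1 - 0.007) ∧
          IsUnit (D₂ - D₁ * D₀⁻¹ * D₁) ∧
          rowSumNorm (D₂ - D₁ * D₀⁻¹ * D₁)⁻¹ ≤ Cκ / f ^ 2 ∧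
          ∀ v : Fin m → ℂ, vecSupNorm v ≤ 1 →
            D₀.mulVec (-(D₀⁻¹ * D₁).mulVec ((D₂ - D₁ * D₀⁻¹ * D₁)⁻¹.mulVec v)) +
                D₁.mulVec ((D₂ - D₁ * D₀⁻¹ * D₁)⁻¹.mulVec v) = 0 ∧
            D₁.mulVec (-(D₀⁻¹ * D₁).mulVec ((D₂ - D₁ * D₀⁻¹ * D₁)⁻¹.mulVec v)) +
                D₂.mulVec ((D₂ - D₁ * D₀⁻¹ * D₁)⁻¹.mulVec v) = v ∧
            vecSupNorm (-(D₀⁻¹ * D₁).mulVec ((D₂ - D₁ * D₀⁻¹ * D₁)⁻¹.mulVec v)) ≤ Cα / f ∧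
            vecSupNorm ((D₂ - D₁ * D₀⁻¹ * D₁)⁻¹.mulVec v) ≤ Cβ / f ^ 2 :=
  interpolation_system_bounds_aux

end
end
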